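/- Let n,m ≥ 1, let h₁,…,hₙ > 0 and 0 < g₁ < ⋯ < g_m, let p ∈ ℝⁿ and q ∈ ℝᵐ be probability vectors with positive entries, and let 0 ≤ Q* ≤ Q. Suppose 1/g_m² ≥ Σᵢ pᵢ/hᵢ². Then Σᵢ pᵢ · log((1 + hᵢ²Q)/(1 + hᵢ²Q*)) ≥ Σⱼ qⱼ · log((1 + gⱼ²Q)/(1 + gⱼ²Q*)). -/

import Mathlib

open Real Set

section aux
variable {a b : ℝ}

lemma derivAux (ha : 0 ≤ a) (hab : a ≤ b) {s : ℝ} (hs : 0 < s) :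
    HasDerivAt (fun s => Real.log (s + b) - Real.log (s + a)) ((s + b)⁻¹ - (s + a)⁻¹) s := by
  have hb : (0:ℝ) < s + b := by linarith
  have ha' : (0:ℝ) < s + a := by linarith
  have h1 : HasDerivAt (fun s : ℝ => Real.log (s + b)) (1 / (s + b)) s :=
    ((hasDerivAt_id s).add_const b).log hb.ne'
  have h2 : HasDerivAt (fun s : ℝ => Real.log (s + a)) (1 / (s + a)) s :=
    ((hasDerivAt_id s).add_const a).log ha'.ne'
  exact (h1.sub h2).congr_deriv (by simp [one_div])

lemma convAux (ha : 0 ≤ a) (hab : a ≤ b) :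
    ConvexOn ℝ (Set.Ioi 0) (fun s => Real.log (s + b) - Real.log (s + a)) := by
  set f : ℝ → ℝ := fun s => Real.log (s + b) - Real.log (s + a) with hf
  have hderiv : ∀ s ∈ Set.Ioi (0:ℝ), deriv f s = (s + b)⁻¹ - (s + a)⁻¹ := by
    intro s hs
    exact (derivAux ha hab hs).deriv
  have hEq : Set.EqOn (deriv f) (fun s => (s + b)⁻¹ - (s + a)⁻¹) (Set.Ioi 0) := hderiv
  have hdiff : DifferentiableOn ℝ f (Set.Ioi 0) := fun s hs =>
    ((derivAux ha hab hs).differentiableAt).differentiableWithinAt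
  have hopen : IsOpen (Set.Ioi (0:ℝ)) := isOpen_Ioi
  have hderiv2 : ∀ s ∈ Set.Ioi (0:ℝ),
      HasDerivAt (deriv f) ((s + a)⁻¹ ^ 2 - (s + b)⁻¹ ^ 2) s := by
    intro s hs
    have hs' : (0:ℝ) < s := hs
    have hb : (0:ℝ) < s + b := by linarith
    have ha' : (0:ℝ) < s + a := by linarith
    have h1 : HasDerivAt (fun s : ℝ => (s + b)⁻¹) (-1 / (s + b) ^ 2) s :=
      ((hasDerivAt_id s).add_const b).inv hb.ne'
    have h2 : HasDerivAt (fun s : ℝ => (s + a)⁻¹) (-1 / (s + a) ^ 2) s :=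
      ((hasDerivAt_id s).add_const a).inv ha'.ne'
    have h3 : HasDerivAt (fun s => (s + b)⁻¹ - (s + a)⁻¹)
        ((s + a)⁻¹ ^ 2 - (s + b)⁻¹ ^ 2) s := by
      have := h1.sub h2
      exact this.congr_deriv (by rw [inv_pow, inv_pow]; ring)
    exact h3.congr_of_eventuallyEq
      (Filter.eventuallyEq_of_mem (hopen.mem_nhds hs) (fun t ht => hderiv t ht))
  apply convexOn_of_deriv2_nonneg (convex_Ioi 0)
  · exact hdiff.continuousOn
  · rwa [interior_Ioi]
  · rw [interior_Ioi]
    exact fun s hs => ((hderiv2 s hs).differentiableAt).differentiableWithinAt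
  · rw [interior_Ioi]
    intro s hs
    have hs' : (0:ℝ) < s := hs
    have hb : (0:ℝ) < s + b := by linarith
    have ha' : (0:ℝ) < s + a := by linarith
    have : deriv^[2] f s = (s + a)⁻¹ ^ 2 - (s + b)⁻¹ ^ 2 := by
      simp only [Function.iterate_succ, Function.iterate_zero, Function.comp_apply, id]
      exact (hderiv2 s hs).deriv
    rw [this]
    have : (s + b)⁻¹ ≤ (s + a)⁻¹ := by
      apply inv_anti₀ ha' (by linarith)
    nlinarith [inv_pos.2 hb, inv_pos.2 ha']

lemma antiAux (ha : 0 ≤ a) (hab : a ≤ b) {s t : ℝ} (hs : 0 < s) (hst : s ≤ t) :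
    Real.log (t + b) - Real.log (t + a) ≤ Real.log (s + b) - Real.log (s + a) := by
  have hsa : (0:ℝ) < s + a := by linarith
  have hta : (0:ℝ) < t + a := by linarith
  have hsb : (0:ℝ) < s + b := by linarith
  have htb : (0:ℝ) < t + b := by linarith
  rw [← Real.log_div htb.ne' hta.ne', ← Real.log_div hsb.ne' hsa.ne']
  apply Real.log_le_log (by positivity)
  rw [div_le_div_iff₀ hta hsa]
  nlinarith

lemma rewAux (ha : 0 ≤ a) (hab : a ≤ b) {x : ℝ} (hx : 0 < x) :
    Real.log ((1 + x * b) / (1 + x * a)) = Real.log (1/x + b) - Real.log (1/x + a) := by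
  have h1 : (0:ℝ) < 1 + x * a := by nlinarith
  have h2 : (0:ℝ) < 1 + x * b := by nlinarith
  have e1 : 1/x + b = (1 + x * b) / x := by field_simp
  have e2 : 1/x + a = (1 + x * a) / x := by field_simp
  rw [Real.log_div h2.ne' h1.ne', e1, e2, Real.log_div h2.ne' hx.ne',
    Real.log_div h1.ne' hx.ne']
  ring
end aux


/-- The chain of inequalities (thm4:a)–(thm4:d) in the proof of Theorem 6
(cap:deg-gen): if `1/g_m² ≥ ∑ pᵢ/hᵢ²` and `0 ≤ Q* ≤ Q`, then
`∑ pᵢ log((1 + hᵢ²Q)/(1 + hᵢ²Q*)) ≥ ∑ qⱼ log((1 + gⱼ²Q)/(1 + gⱼ²Q*))`.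
Here `n, m ≥ 1` are encoded as `n + 1`, `m + 1`; the logarithm is natural. -/
theorem stmt16 (n m : ℕ)
    (h : Fin (n + 1) → ℝ) (hh0 : ∀ i, 0 < h i)
    (g : Fin (m + 1) → ℝ) (hg0 : ∀ j, 0 < g j) (hgmono : StrictMono g)
    (p : Fin (n + 1) → ℝ) (hp : ∀ i, 0 < p i) (hpsum : ∑ i, p i = 1)
    (q : Fin (m + 1) → ℝ) (hq : ∀ j, 0 < q j) (hqsum : ∑ j, q j = 1)
    (Q Qstar : ℝ) (hQs : 0 ≤ Qstar) (hQsQ : Qstar ≤ Q)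
    (hcond : 1 / (g (Fin.last m)) ^ 2 ≥ ∑ i, p i / (h i) ^ 2) :
    ∑ i, p i * Real.log ((1 + (h i) ^ 2 * Q) / (1 + (h i) ^ 2 * Qstar)) ≥
      ∑ j, q j * Real.log ((1 + (g j) ^ 2 * Q) / (1 + (g j) ^ 2 * Qstar)) := by
  set f : ℝ → ℝ := fun s => Real.log (s + Q) - Real.log (s + Qstar) with hfdef
  have hL : ∀ i, Real.log ((1 + (h i) ^ 2 * Q) / (1 + (h i) ^ 2 * Qstar))
      = f (1 / (h i) ^ 2) := fun i => rewAux hQs hQsQ (pow_pos (hh0 i) 2)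
  have hR : ∀ j, Real.log ((1 + (g j) ^ 2 * Q) / (1 + (g j) ^ 2 * Qstar))
      = f (1 / (g j) ^ 2) := fun j => rewAux hQs hQsQ (pow_pos (hg0 j) 2)
  have hgm : (0:ℝ) < 1 / (g (Fin.last m)) ^ 2 := one_div_pos.2 (pow_pos (hg0 _) 2)
  have hSpos : (0:ℝ) < ∑ i, p i / (h i) ^ 2 :=
    Finset.sum_pos (fun i _ => div_pos (hp i) (pow_pos (hh0 i) 2)) Finset.univ_nonempty
  -- Step 1: RHS ≤ f(1/g_m²)
  have step1 : ∑ j, q j * Real.log ((1 + (g j) ^ 2 * Q) / (1 + (g j) ^ 2 * Qstar))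
      ≤ f (1 / (g (Fin.last m)) ^ 2) := by
    calc ∑ j, q j * Real.log ((1 + (g j) ^ 2 * Q) / (1 + (g j) ^ 2 * Qstar))
        ≤ ∑ j, q j * f (1 / (g (Fin.last m)) ^ 2) := by
          apply Finset.sum_le_sum
          intro j _
          rw [hR j]
          apply mul_le_mul_of_nonneg_left _ (hq j).le
          apply antiAux hQs hQsQ hgm
          apply one_div_le_one_div_of_le (pow_pos (hg0 j) 2)
          exact pow_le_pow_left₀ (hg0 j).le (hgmono.monotone (Fin.le_last j)) 2
      _ = f (1 / (g (Fin.last m)) ^ 2) := by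
          rw [← Finset.sum_mul, hqsum, one_mul]
  -- Step 2: f(1/g_m²) ≤ f(S)
  have step2 : f (1 / (g (Fin.last m)) ^ 2) ≤ f (∑ i, p i / (h i) ^ 2) :=
    antiAux hQs hQsQ hSpos hcond
  -- Step 3 (Jensen): f(S) ≤ ∑ pᵢ f(1/hᵢ²)
  have step3 : f (∑ i, p i / (h i) ^ 2)
      ≤ ∑ i, p i * f (1 / (h i) ^ 2) := by
    have := (convAux hQs hQsQ).map_sum_le (t := Finset.univ)
      (w := p) (p := fun i => 1 / (h i) ^ 2)
      (fun i _ => (hp i).le) hpsum (fun i _ => Set.mem_Ioi.2 (one_div_pos.2 (pow_pos (hh0 i) 2)))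
    simpa only [smul_eq_mul, mul_one_div] using this
  have hLHS : ∑ i, p i * Real.log ((1 + (h i) ^ 2 * Q) / (1 + (h i) ^ 2 * Qstar))
      = ∑ i, p i * f (1 / (h i) ^ 2) := Finset.sum_congr rfl (fun i _ => by rw [hL i])
  rw [ge_iff_le, hLHS]
  exact le_trans step1 (le_trans step2 step3)
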